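/- Let (\gamma_k)_{k=0}^{\infty} be a multiplier sequence of non-negative real numbers and fix an integer k \ge 1. Then: (i) for every real t \ne 0, t^k B_k(1/t) = \sum_{j=0}^{k} \binom{k}{j} (t-1)^j \gamma_{k-j}, where B_k(t) = \sum_{j=0}^{k} \binom{k}{j}(1-t)^j \gamma_{k-j} t^{k-j}; and (ii) the polynomial t \mapsto B_k(t) has only real zeros. -/

import Mathlib

/-- The polynomial obtained by applying the sequence `γ` coefficientwise:
`T[∑ aₖ xᵏ] = ∑ γₖ aₖ xᵏ`. -/
noncomputable def applySeq (γ : ℕ → ℝ) (p : Polynomial ℝ) : Polynomial ℝ :=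
  ∑ k ∈ Finset.range (p.natDegree + 1), Polynomial.C (γ k * p.coeff k) * Polynomial.X ^ k

/-- A real polynomial has only real roots (over `ℂ`). -/
def RealRooted (p : Polynomial ℝ) : Prop :=
  ∀ z : ℂ, Polynomial.aeval z p = 0 → z.im = 0

/-- A classical multiplier sequence. -/
def IsMultiplierSequence (γ : ℕ → ℝ) : Prop :=
  ∀ p : Polynomial ℝ, RealRooted p → RealRooted (applySeq γ p)

theorem deformed_polynomial_real_rooted (γ : ℕ → ℝ) (hγ0 : ∀ k, 0 ≤ γ k)
    (hγ : IsMultiplierSequence γ) (k : ℕ) (hk : 1 ≤ k) :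
    (∀ t : ℝ, t ≠ 0 →
      t ^ k * (∑ j ∈ Finset.range (k + 1),
          (k.choose j : ℝ) * (1 - 1 / t) ^ j * γ (k - j) * (1 / t) ^ (k - j))
        = ∑ j ∈ Finset.range (k + 1), (k.choose j : ℝ) * (t - 1) ^ j * γ (k - j)) ∧
    (∀ z : ℂ, (∑ j ∈ Finset.range (k + 1),
        (k.choose j : ℂ) * (1 - z) ^ j * (γ (k - j) : ℂ) * z ^ (k - j)) = 0 →
      z.im = 0) := by
  constructor
  · intro t ht
    rw [Finset.mul_sum]
    refine Finset.sum_congr rfl fun j hj => ?_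
    have hjk : j ≤ k := Nat.lt_succ_iff.mp (Finset.mem_range.mp hj)
    have h1 : t ^ k = t ^ j * t ^ (k - j) := by
      rw [← pow_add, Nat.add_sub_cancel' hjk]
    have h2 : t * (1 - 1 / t) = t - 1 := by field_simp
    have h3 : t * (1 / t) = 1 := by field_simp
    calc t ^ k * ((k.choose j : ℝ) * (1 - 1 / t) ^ j * γ (k - j) * (1 / t) ^ (k - j))
        = (k.choose j : ℝ) * (t * (1 - 1 / t)) ^ j * γ (k - j) * (t * (1 / t)) ^ (k - j) := by
          rw [h1, mul_pow, mul_pow]; ring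
      _ = (k.choose j : ℝ) * (t - 1) ^ j * γ (k - j) := by rw [h2, h3, one_pow, mul_one]
  · -- part (ii)
    have hdeg : ((Polynomial.X + 1 : Polynomial ℝ) ^ k).natDegree = k := by
      compute_degree!
    have hprr : RealRooted ((Polynomial.X + 1 : Polynomial ℝ) ^ k) := by
      intro z hz
      have : (z + 1) ^ k = 0 := by simpa using hz
      have : z + 1 = 0 := pow_eq_zero_iff (by omega) |>.mp this
      have : z = -1 := by linear_combination this
      simp [this]
    have hQr : RealRooted (applySeq γ ((Polynomial.X + 1) ^ k)) := hγ _ hprr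
    have haQ : ∀ w : ℂ, Polynomial.aeval w (applySeq γ ((Polynomial.X + 1) ^ k))
        = ∑ i ∈ Finset.range (k + 1), (γ i : ℂ) * (k.choose i : ℂ) * w ^ i := by
      intro w
      rw [applySeq, hdeg, map_sum]
      refine Finset.sum_congr rfl fun i _ => ?_
      rw [Polynomial.coeff_X_add_one_pow]
      simp
    intro z hz
    by_contra him
    have hz1 : (1 : ℂ) - z ≠ 0 := by
      intro h
      apply him
      have : z = 1 := by linear_combination -h
      simp [this]
    set w : ℂ := z / (1 - z) with hw
    have key : (∑ j ∈ Finset.range (k + 1),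
        (k.choose j : ℂ) * (1 - z) ^ j * (γ (k - j) : ℂ) * z ^ (k - j))
        = (1 - z) ^ k * Polynomial.aeval w (applySeq γ ((Polynomial.X + 1) ^ k)) := by
      rw [haQ, Finset.mul_sum]
      rw [← Finset.sum_range_reflect]
      refine Finset.sum_congr rfl fun i hi => ?_
      have hik : i ≤ k := Nat.lt_succ_iff.mp (Finset.mem_range.mp hi)
      have h1 : k + 1 - 1 - i = k - i := by omega
      have h2 : k - (k - i) = i := by omega
      have h3 : k.choose (k - i) = k.choose i := Nat.choose_symm hik
      have h4 : ((1 : ℂ) - z) ^ k = (1 - z) ^ (k - i) * (1 - z) ^ i := by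
        rw [← pow_add, Nat.sub_add_cancel hik]
      rw [h1, h2, h3, h4, hw, div_pow]
      field_simp
    rw [key] at hz
    have hQ0 : Polynomial.aeval w (applySeq γ ((Polynomial.X + 1) ^ k)) = 0 := by
      rcases mul_eq_zero.mp hz with h | h
      · exact absurd h (pow_ne_zero _ hz1)
      · exact h
    have hwim : w.im = 0 := hQr w hQ0
    have hzw : z * (1 + w) = w := by
      rw [hw]; field_simp; ring
    have him2 : (z * (1 + w)).im = z.im * (1 + w.re) := by
      simp [Complex.mul_im, Complex.add_im, hwim, Complex.add_re]
    by_cases hre : 1 + w.re = 0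
    · have hw0 : 1 + w = 0 := by
        apply Complex.ext <;> simp [hwim, hre]
      rw [hw0, mul_zero] at hzw
      rw [← hzw] at hre
      simp at hre
    · apply him
      have : z.im * (1 + w.re) = w.im := by rw [← him2, hzw]
      rw [hwim] at this
      exact (mul_eq_zero.mp this).resolve_right hre
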